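/- arXiv:2510.20623 — 4 statements merged into one kernel-verified Lean document; each statement's English description precedes it below -/
import Mathlib

section
/- Let W : ℝ^{3×3} → ℝ be differentiable at every point and frame indifferent, i.e. W(RF) = W(F) for every R ∈ SO(3) and every F ∈ ℝ^{3×3}. Then for every F ∈ ℝ^{3×3} the matrix DW(F)Fᵀ is symmetric, i.e. DW(F)Fᵀ = F(DW(F))ᵀ. (The proof differentiates t ↦ W(e^{tS}F) at t = 0 for skew-symmetric S.) -/
/- STATEMENT 1: For a frame-indifferent differentiable stored energy function
`W : ℝ^{3×3} → ℝ`, the matrix `DW(F)Fᵀ` is symmetric for every `F`: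
`DW(F)Fᵀ = F(DW(F))ᵀ`. -/

open Matrix

noncomputable section

attribute [local instance]
  Matrix.frobeniusNormedAddCommGroup Matrix.frobeniusNormedSpace

abbrev Mat3 := Matrix (Fin 3) (Fin 3) ℝ

/-- The special orthogonal group SO(3). -/
def SO3 : Set Mat3 := {R | Rᵀ * R = 1 ∧ R.det = 1}

/-- The Frobenius inner product `A : B = Σᵢⱼ Aᵢⱼ Bᵢⱼ`. -/
def finner (A B : Mat3) : ℝ := ∑ i, ∑ j, A i j * B i j

attribute [local instance]
  Matrix.frobeniusNormedRing Matrix.frobeniusNormedAlgebra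

open NormedSpace in
lemma skew_exp_orth (S : Mat3) (hS : Sᵀ = -S) (t : ℝ) :
    (exp (t • S))ᵀ * exp (t • S) = 1 := by
  have h1 : (t • S)ᵀ = -(t • S) := by rw [transpose_smul, hS, smul_neg]
  rw [← Matrix.exp_transpose, h1, ← (by exact Matrix.exp_add_of_commute (-(t • S)) (t • S) (Commute.neg_left rfl) : exp (-(t • S) + t • S) = exp (-(t • S)) * exp (t • S))]
  simp [NormedSpace.exp_zero]

open NormedSpace in
lemma skew_exp_mem_SO3 (S : Mat3) (hS : Sᵀ = -S) (t : ℝ) :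
    exp (t • S) ∈ SO3 := by
  refine ⟨skew_exp_orth S hS t, ?_⟩
  set f : ℝ → ℝ := fun u => (exp (u • S)).det with hf
  have hcont : Continuous f := by
    exact (exp_continuous.comp (continuous_id.smul continuous_const)).matrix_det
  have hsq : ∀ u, f u ^ 2 = 1 := by
    intro u
    have := congrArg Matrix.det (skew_exp_orth S hS u)
    simpa [det_mul, det_transpose, sq, hf] using this
  have hzero : f 0 = 1 := by simp [hf, NormedSpace.exp_zero]
  have hne : ∀ u, f u ≠ 0 := by
    intro u h
    have := hsq u
    rw [h] at this; norm_num at this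
  -- f t ∈ {-1, 1}; show f t = 1 by IVT
  have hval : f t = 1 ∨ f t = -1 := by
    have h := hsq t
    have h' : (f t - 1) * (f t + 1) = 0 := by nlinarith
    rcases mul_eq_zero.mp h' with h'' | h''
    · left; linarith
    · right; linarith
  rcases hval with h | h
  · exact h
  · exfalso
    rcases le_total 0 t with ht | ht
    · have := intermediate_value_Icc' ht hcont.continuousOn
      have h0 : (0 : ℝ) ∈ Set.Icc (f t) (f 0) := by rw [h, hzero]; norm_num
      obtain ⟨s, _, hs⟩ := this h0
      exact hne s hs
    · have := intermediate_value_Icc ht hcont.continuousOn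
      have h0 : (0 : ℝ) ∈ Set.Icc (f t) (f 0) := by rw [h, hzero]; norm_num
      obtain ⟨s, _, hs⟩ := this h0
      exact hne s hs

lemma finner_eq_trace (A B : Mat3) : finner A B = (A * Bᵀ).trace := by
  simp [finner, Matrix.trace, Matrix.mul_apply, Matrix.diag]

lemma finner_mul_right (A S F : Mat3) : finner A (S * F) = finner S (A * Fᵀ) := by
  simp only [finner, Matrix.mul_apply, transpose_apply, Finset.mul_sum]
  refine Finset.sum_congr rfl fun i _ => ?_
  rw [Finset.sum_comm]
  exact Finset.sum_congr rfl fun k _ => Finset.sum_congr rfl fun j _ => by ring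

lemma finner_sub_right (A B C : Mat3) : finner A (B - C) = finner A B - finner A C := by
  simp [finner, mul_sub, Finset.sum_sub_distrib]

lemma finner_transpose (A B : Mat3) : finner Aᵀ B = finner A Bᵀ := by
  rw [finner]; rw [Finset.sum_comm]; simp [finner, transpose_apply, mul_comm]

lemma finner_self_eq_zero {A : Mat3} (h : finner A A = 0) : A = 0 := by
  rw [finner] at h
  have h1 : ∀ i ∈ Finset.univ, ∑ j, A i j * A i j = 0 := by
    rw [Finset.sum_eq_zero_iff_of_nonneg] at h
    · exact h
    · intro i _
      exact Finset.sum_nonneg fun j _ => mul_self_nonneg _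
  ext i j
  have h2 := (Finset.sum_eq_zero_iff_of_nonneg
    (fun j _ => mul_self_nonneg (A i j))).mp (h1 i (Finset.mem_univ i)) j (Finset.mem_univ j)
  simpa [mul_self_eq_zero] using h2

open NormedSpace in
theorem DW_mul_transpose_symmetric
    (W : Mat3 → ℝ) (DW : Mat3 → Mat3)
    (hdiff : Differentiable ℝ W)
    (hDW : ∀ F H : Mat3, fderiv ℝ W F H = finner (DW F) H)
    (hfi : ∀ R ∈ SO3, ∀ F : Mat3, W (R * F) = W F) :
    ∀ F : Mat3, DW F * Fᵀ = F * (DW F)ᵀ := by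
  intro F
  set M : Mat3 := DW F * Fᵀ with hM
  have key : ∀ S : Mat3, Sᵀ = -S → finner S M = 0 := by
    intro S hS
    -- the curve t ↦ exp(t • S) * F
    have hexp : HasDerivAt (fun t : ℝ => exp (t • S)) S 0 := by
      have := hasDerivAt_exp_smul_const (𝕂 := ℝ) S 0
      simp only [zero_smul, NormedSpace.exp_zero, one_mul] at this
      exact this
    have hcurve : HasDerivAt (fun t : ℝ => exp (t • S) * F) (S * F) 0 := hexp.mul_const F
    have hW : HasFDerivAt W (fderiv ℝ W F) (exp ((0:ℝ) • S) * F) := by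
      simpa [NormedSpace.exp_zero] using (hdiff F).hasFDerivAt
    have hcomp : HasDerivAt (fun t : ℝ => W (exp (t • S) * F))
        (fderiv ℝ W F (S * F)) 0 := hW.comp_hasDerivAt 0 hcurve
    have hconst : (fun t : ℝ => W (exp (t • S) * F)) = fun _ => W F := by
      funext t
      exact hfi _ (skew_exp_mem_SO3 S hS t) F
    rw [hconst] at hcomp
    have hzero : fderiv ℝ W F (S * F) = 0 :=
      hcomp.unique (hasDerivAt_const 0 (W F))
    rw [hDW, finner_mul_right] at hzero
    exact hzero
  have hskew : (M - Mᵀ)ᵀ = -(M - Mᵀ) := by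
    rw [transpose_sub, transpose_transpose, neg_sub]
  have h1 : finner (M - Mᵀ) M = 0 := key _ hskew
  have h2 : finner (M - Mᵀ) Mᵀ = 0 := by
    have := finner_transpose (M - Mᵀ) M
    rw [hskew] at this
    have hneg : finner (-(M - Mᵀ)) M = -finner (M - Mᵀ) M := by
      simp only [finner, Matrix.neg_apply, neg_mul, Finset.sum_neg_distrib]
    rw [hneg, h1, neg_zero] at this
    exact this.symm
  have h3 : finner (M - Mᵀ) (M - Mᵀ) = 0 := by
    rw [finner_sub_right, h1, h2, sub_zero]
  have h4 : M - Mᵀ = 0 := finner_self_eq_zero h3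
  have h5 : M = Mᵀ := by linear_combination (norm := (ext i j; simp)) h4
  rw [hM] at h5 ⊢
  rw [h5, transpose_mul, transpose_transpose]
end
end

section
/- Let W : ℝ^{3×3} → [0, ∞) be twice continuously differentiable on an open neighborhood of the identity matrix Id and satisfy W(R) = 0 for every R ∈ SO(3). Define ℒ : ℝ^{3×3} → ℝ^{3×3} by ⟨ℒF₁, F₂⟩ = D²W(Id)[F₁, F₂]. Then for every F ∈ ℝ^{3×3} the matrix ℒF is symmetric, and the quadratic form Q(F) := ⟨ℒF, F⟩ satisfies Q(F) ≥ 0 and Q(F) = Q(sym F) for every F. -/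
/- STATEMENT 5: With `W : ℝ^{3×3} → [0,∞)` C² near `Id`, vanishing on SO(3), and
`ℒ` defined by `⟨ℒF₁, F₂⟩ = D²W(Id)[F₁,F₂]`: for every `F` the matrix `ℒF` is symmetric,
and `Q(F) := ⟨ℒF, F⟩` satisfies `Q(F) ≥ 0` and `Q(F) = Q(sym F)`. -/

open Matrix

noncomputable section

attribute [local instance]
  Matrix.frobeniusNormedAddCommGroup Matrix.frobeniusNormedSpace

/-- The symmetric part of a matrix. -/
def symPart (M : Mat3) : Mat3 := (1 / 2 : ℝ) • (M + Mᵀ)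

section ExpAux

attribute [local instance] Matrix.frobeniusNormedRing Matrix.frobeniusNormedAlgebra

/-- Derivative of the exponential curve. -/
lemma expCurve_hasDerivAt (A : Mat3) (t : ℝ) :
    HasDerivAt (fun s : ℝ => NormedSpace.exp (s • A)) (NormedSpace.exp (t • A) * A) t :=
  hasDerivAt_exp_smul_const (𝕂 := ℝ) A t

lemma expCurve_mul_hasDerivAt (A : Mat3) :
    HasDerivAt (fun s : ℝ => NormedSpace.exp (s • A) * A) (A * A) 0 := by
  have h := (expCurve_hasDerivAt A 0).mul_const A
  simp only [zero_smul, NormedSpace.exp_zero, one_mul] at h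
  exact h

end ExpAux

lemma expCurve_hasDerivAt_zero (A : Mat3) :
    HasDerivAt (fun s : ℝ => NormedSpace.exp (s • A)) A 0 := by
  simpa using expCurve_hasDerivAt A 0

lemma expCurve_continuous (A : Mat3) :
    Continuous (fun s : ℝ => NormedSpace.exp (s • A)) := by
  have : Differentiable ℝ (fun s : ℝ => NormedSpace.exp (s • A)) :=
    fun t => (expCurve_hasDerivAt A t).differentiableAt
  exact this.continuous

lemma expCurve_mem_SO3 (A : Mat3) (hA : Aᵀ = -A) (t : ℝ) :
    NormedSpace.exp (t • A) ∈ SO3 := by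
  have hmul : (NormedSpace.exp (t • A))ᵀ * NormedSpace.exp (t • A) = 1 := by
    rw [← Matrix.exp_transpose, ← Matrix.exp_add_of_commute]
    · rw [transpose_smul, hA]; simp
    · rw [transpose_smul, hA]; simp [Commute, SemiconjBy, mul_comm]
  refine ⟨hmul, ?_⟩
  -- determinant is ±1 and depends continuously on t, equal to 1 at t = 0
  set d : ℝ → ℝ := fun s => (NormedSpace.exp (s • A)).det with hd
  have hsq : ∀ s, d s ^ 2 = 1 := by
    intro s
    have hm : (NormedSpace.exp (s • A))ᵀ * NormedSpace.exp (s • A) = 1 := by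
      rw [← Matrix.exp_transpose, ← Matrix.exp_add_of_commute]
      · rw [transpose_smul, hA]; simp
      · rw [transpose_smul, hA]; simp [Commute, SemiconjBy, mul_comm]
    have := congrArg Matrix.det hm
    rwa [Matrix.det_mul, Matrix.det_transpose, Matrix.det_one, ← sq] at this
  have hd0 : d 0 = 1 := by simp [hd, NormedSpace.exp_zero]
  have hcont : Continuous d := (expCurve_continuous A).matrix_det
  by_contra hne
  have hdt : d t = -1 := by
    have := hsq t
    rcases sq_eq_one_iff.mp this with h | h
    · exact absurd h hne
    · exact h
  have h0mem : (0 : ℝ) ∈ Set.uIcc (d 0) (d t) := by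
    rw [hd0, hdt]
    rw [Set.uIcc_comm]
    exact Set.mem_uIcc.2 (Or.inl ⟨by norm_num, by norm_num⟩)
  obtain ⟨s, _, hs⟩ := intermediate_value_uIcc (hcont.continuousOn) h0mem
  have := hsq s
  rw [hs] at this
  norm_num at this

open Filter Topology in
theorem L_symmetric_and_Q_nonneg
    (W : Mat3 → ℝ) (U : Set Mat3) (hU : IsOpen U) (hIdU : (1 : Mat3) ∈ U)
    (hC2 : ContDiffOn ℝ 2 W U)
    (hpos : ∀ F : Mat3, 0 ≤ W F)
    (hSO : ∀ R ∈ SO3, W R = 0)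
    (L : Mat3 → Mat3)
    (hL : ∀ F₁ F₂ : Mat3, finner (L F₁) F₂ = fderiv ℝ (fderiv ℝ W) 1 F₁ F₂) :
    ∀ F : Mat3, (L F)ᵀ = L F ∧ 0 ≤ finner (L F) F ∧
      finner (L F) F = finner (L (symPart F)) (symPart F) := by
  have hUnhds : U ∈ 𝓝 (1 : Mat3) := hU.mem_nhds hIdU
  set B := fderiv ℝ (fderiv ℝ W) 1 with hBdef
  have hdiff : ∀ y ∈ U, HasFDerivAt W (fderiv ℝ W y) y := by
    intro y hy
    exact ((hC2.contDiffAt (hU.mem_nhds hy)).differentiableAt (by norm_num)).hasFDerivAt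
  have hW' : ∀ᶠ y in 𝓝 (1 : Mat3), HasFDerivAt W (fderiv ℝ W y) y := by
    filter_upwards [hUnhds] with y hy using hdiff y hy
  have hW'' : HasFDerivAt (fderiv ℝ W) B 1 := by
    have h1 :=
      (hC2.contDiffAt hUnhds).fderiv_right (m := 1) (by norm_num)
    exact (h1.differentiableAt (by norm_num)).hasFDerivAt
  have Bsymm : ∀ v w, B v w = B w v := fun v w =>
    second_derivative_symmetric_of_eventually hW' hW'' v w
  have hW1 : W 1 = 0 := hSO 1 ⟨by simp, by simp⟩
  have hmin : IsLocalMin W 1 := by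
    apply Filter.Eventually.of_forall
    intro y; rw [hW1]; exact hpos y
  have hD1 : fderiv ℝ W 1 = 0 := hmin.fderiv_eq_zero
  -- derivative of `fderiv W` along a curve through the identity
  have key : ∀ (c : ℝ → Mat3) (v : Mat3), c 0 = 1 → HasDerivAt c v 0 →
      HasDerivAt (fun t => fderiv ℝ W (c t)) (B v) 0 := by
    intro c v hc0 hcv
    letI : NormedAddCommGroup (Mat3 →L[ℝ] ℝ) := ContinuousLinearMap.toNormedAddCommGroup
    letI : NormedSpace ℝ (Mat3 →L[ℝ] ℝ) := ContinuousLinearMap.toNormedSpace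
    have hW3 := hW''
    rw [← hc0] at hW3
    have h := hW3.comp_hasDerivAt 0 hcv
    exact h
  -- Q is nonnegative on all of Mat3
  have hBnn : ∀ H : Mat3, 0 ≤ B H H := by
    intro H
    have hline : ∀ t : ℝ, HasDerivAt (fun s : ℝ => (1 : Mat3) + s • H) H t := by
      intro t
      have h := ((hasDerivAt_id t).smul_const H).const_add (1 : Mat3)
      rw [one_smul] at h
      exact h
    have hevU : ∀ᶠ t in 𝓝 (0 : ℝ), (1 : Mat3) + t • H ∈ U := by
      have hT : Filter.Tendsto (fun s : ℝ => (1 : Mat3) + s • H) (𝓝 0) (𝓝 1) := by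
        have := (hline 0).continuousAt.tendsto
        rw [zero_smul, add_zero] at this
        exact this
      exact hT hUnhds
    set g : ℝ → ℝ := fun t => fderiv ℝ W (1 + t • H) H with hgdef
    have hφ' : ∀ᶠ t in 𝓝 (0 : ℝ), HasDerivAt (fun s => W (1 + s • H)) (g t) t := by
      filter_upwards [hevU] with t ht
      exact (hdiff _ ht).comp_hasDerivAt t (hline t)
    have hgd : HasDerivAt g (B H H) 0 := by
      have h1 : HasDerivAt (fun t : ℝ => fderiv ℝ W (1 + t • H)) (B H) 0 :=
        key (fun s => 1 + s • H) H (by simp) (hline 0)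
      have h2 := h1.clm_apply (hasDerivAt_const 0 H)
      refine h2.congr_deriv ?_
      have hz : (fderiv ℝ W (1 + (0 : ℝ) • H)) 0 = 0 := map_zero _
      exact (congrArg (fun x => B H H + x) hz).trans (add_zero _)
    by_contra hneg
    push_neg at hneg
    have hg0 : g 0 = 0 := by simp [hgdef, hD1]
    have hslope : Filter.Tendsto (slope g 0) (𝓝[≠] (0 : ℝ)) (𝓝 (B H H)) :=
      hasDerivAt_iff_tendsto_slope.mp hgd
    have hev1 : ∀ᶠ t in 𝓝[≠] (0 : ℝ), slope g 0 t < 0 :=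
      hslope.eventually_lt_const hneg
    obtain ⟨ε1, hε1, h1⟩ := Metric.eventually_nhds_iff.mp hφ'
    obtain ⟨ε2, hε2, h2⟩ := Metric.eventually_nhds_iff.mp (eventually_nhdsWithin_iff.mp hev1)
    set δ : ℝ := min ε1 ε2 / 2 with hδdef
    have hδpos : 0 < δ := by positivity
    have hm1 : min ε1 ε2 ≤ ε1 := min_le_left _ _
    have hm2 : min ε1 ε2 ≤ ε2 := min_le_right _ _
    have hδ1 : δ < ε1 := by rw [hδdef]; linarith
    have hδ2 : δ < ε2 := by rw [hδdef]; linarith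
    have hanti : StrictAntiOn (fun s => W (1 + s • H)) (Set.Icc 0 δ) := by
      apply strictAntiOn_of_deriv_neg (convex_Icc 0 δ)
      · intro t ht
        have hdist : dist t (0 : ℝ) < ε1 := by
          rw [Real.dist_eq, sub_zero, abs_of_nonneg ht.1]
          exact lt_of_le_of_lt ht.2 hδ1
        exact ((h1 hdist).continuousAt).continuousWithinAt
      · intro x hx
        rw [interior_Icc] at hx
        have hxd : dist x (0 : ℝ) < ε1 := by
          rw [Real.dist_eq, sub_zero, abs_of_pos hx.1]
          linarith [hx.2]
        have hxd2 : dist x (0 : ℝ) < ε2 := by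
          rw [Real.dist_eq, sub_zero, abs_of_pos hx.1]
          linarith [hx.2]
        have hder : deriv (fun s => W (1 + s • H)) x = g x := (h1 hxd).deriv
        rw [hder]
        have hq0 : slope g 0 x < 0 := h2 hxd2 (ne_of_gt hx.1)
        have hq : g x / x < 0 := by
          rwa [slope_def_field, hg0, sub_zero, sub_zero] at hq0
        rcases div_neg_iff.mp hq with ⟨_, hc⟩ | ⟨hgx, _⟩
        · exact absurd hx.1 (not_lt.mpr (le_of_lt hc))
        · exact hgx
    have hlt : W (1 + δ • H) < W (1 + (0 : ℝ) • H) :=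
      hanti (Set.left_mem_Icc.mpr (le_of_lt hδpos)) (Set.right_mem_Icc.mpr (le_of_lt hδpos)) hδpos
    have : W (1 + (0 : ℝ) • H) = 0 := by simpa using hW1
    rw [this] at hlt
    exact absurd hlt (not_lt.mpr (hpos _))
  -- B vanishes on skew matrices
  have hBskew : ∀ A : Mat3, Aᵀ = -A → B A A = 0 := by
    intro A hA
    have hc0 : NormedSpace.exp ((0 : ℝ) • A) = 1 := by simp [NormedSpace.exp_zero]
    have hWc : ∀ t : ℝ, W (NormedSpace.exp (t • A)) = 0 :=
      fun t => hSO _ (expCurve_mem_SO3 A hA t)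
    have hevU : ∀ᶠ t in 𝓝 (0 : ℝ), NormedSpace.exp (t • A) ∈ U := by
      have hT : Filter.Tendsto (fun s : ℝ => NormedSpace.exp (s • A)) (𝓝 0) (𝓝 1) := by
        have := (expCurve_continuous A).continuousAt (x := (0 : ℝ))
        have h2 := this.tendsto
        rwa [hc0] at h2
      exact hT hUnhds
    set g : ℝ → ℝ := fun t => fderiv ℝ W (NormedSpace.exp (t • A))
        (NormedSpace.exp (t • A) * A) with hgdef
    have hg0 : ∀ᶠ t in 𝓝 (0 : ℝ), g t = 0 := by
      filter_upwards [hevU] with t ht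
      have h1 : HasDerivAt (fun s => W (NormedSpace.exp (s • A))) (g t) t :=
        (hdiff _ ht).comp_hasDerivAt t (expCurve_hasDerivAt A t)
      have h2 : HasDerivAt (fun s => W (NormedSpace.exp (s • A))) 0 t := by
        have he : (fun s : ℝ => W (NormedSpace.exp (s • A))) = fun _ => (0 : ℝ) :=
          funext fun s => hWc s
        rw [he]; exact hasDerivAt_const t 0
      exact h1.unique h2
    have hgd : HasDerivAt g (B A A) 0 := by
      have h1 : HasDerivAt (fun t : ℝ => fderiv ℝ W (NormedSpace.exp (t • A))) (B A) 0 :=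
        key _ A hc0 (expCurve_hasDerivAt_zero A)
      have h2 := h1.clm_apply (expCurve_mul_hasDerivAt A)
      simp [hc0, hD1] at h2
      refine h2.congr_deriv ?_
      exact add_zero _
    have hzero : HasDerivAt g 0 0 := by
      have : g =ᶠ[𝓝 (0 : ℝ)] fun _ => (0 : ℝ) := hg0
      exact (hasDerivAt_const 0 (0 : ℝ)).congr_of_eventuallyEq this
    exact hgd.unique hzero
  -- B with one skew argument vanishes (PSD Cauchy-Schwarz)
  have hBorth : ∀ (H A : Mat3), Aᵀ = -A → B H A = 0 := by
    intro H A hA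
    by_contra h
    have key2 : ∀ t : ℝ, 0 ≤ B H H + 2 * t * B H A := by
      intro t
      have h0 := hBnn (H + t • A)
      have expand : B (H + t • A) (H + t • A) = B H H + 2 * t * B H A := by
        simp only [map_add, _root_.map_smul, ContinuousLinearMap.add_apply,
          ContinuousLinearMap.smul_apply, smul_eq_mul]
        rw [hBskew A hA, Bsymm A H]
        ring
      rwa [expand] at h0
    have hval := key2 (-(B H H + 1) / (2 * B H A))
    have h2 : 2 * (-(B H H + 1) / (2 * B H A)) * B H A = -(B H H + 1) := by
      field_simp
    rw [h2] at hval
    linarith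
  -- evaluation of finner against standard basis matrices
  have hstd : ∀ (M : Mat3) (i j : Fin 3), finner M (single i j (1 : ℝ)) = M i j := by
    intro M i j
    simp [finner, single, mul_ite, ite_and, Finset.sum_ite_eq]
  intro F
  refine ⟨?_, ?_, ?_⟩
  · -- symmetry of L F
    ext i j
    show L F j i = L F i j
    have h1 : L F i j = B F (single i j 1) := by
      rw [← hstd (L F) i j, hL]
    have h2 : L F j i = B F (single j i 1) := by
      rw [← hstd (L F) j i, hL]
    have hstdT : ∀ (a b : Fin 3), (single a b (1 : ℝ))ᵀ = single b a 1 := by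
      intro a b
      ext x y
      simp [single, Matrix.transpose_apply, and_comm]
    have hskew : (single j i (1 : ℝ) - single i j 1)ᵀ =
        -(single j i (1 : ℝ) - single i j 1) := by
      rw [transpose_sub, hstdT, hstdT, neg_sub]
    have h3 : B F (single j i 1 - single i j 1) = 0 :=
      hBorth F _ hskew
    rw [map_sub] at h3
    rw [h1, h2]
    linarith
  · rw [hL]
    exact hBnn F
  · rw [hL, hL]
    set S := symPart F with hSdef
    set A := (1 / 2 : ℝ) • (F - Fᵀ) with hAdef
    have hFdecomp : F = S + A := by
      rw [hSdef, hAdef]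
      unfold symPart
      ext i j
      simp [Matrix.add_apply, Matrix.smul_apply, Matrix.transpose_apply, Matrix.sub_apply]
      ring
    have hAskew : Aᵀ = -A := by
      rw [hAdef]
      ext i j
      simp [Matrix.transpose_apply, Matrix.smul_apply, Matrix.sub_apply]
      ring
    have hSA : B S A = 0 := hBorth S A hAskew
    have hAS : B A S = 0 := by rw [Bsymm A S]; exact hSA
    have hAA : B A A = 0 := hBskew A hAskew
    calc B F F = B (S + A) (S + A) := by rw [← hFdecomp]
      _ = B S S + B S A + (B A S + B A A) := by
          simp only [map_add, ContinuousLinearMap.add_apply]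
          ring
      _ = B S S := by rw [hSA, hAS, hAA]; ring
end
end

section
/- Let X be a reflexive Banach space, Y a Banach space, and ι : X → Y an injective continuous linear map. Let T > 0, M ≥ 0, and let f : [0,T] → X be a function such that (i) t ↦ ι(f(t)) is weakly continuous in Y, i.e. t ↦ ψ(ι(f(t))) is continuous on [0,T] for every ψ in the dual of Y, and (ii) ‖f(t)‖_X ≤ M for Lebesgue-almost every t ∈ [0,T]. Then ‖f(t)‖_X ≤ M for every t ∈ [0,T], and f is weakly continuous as an X-valued function, i.e. t ↦ φ(f(t)) is continuous on [0,T] for every φ in the dual of X. -/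
/- STATEMENT 8: Let `X` be a reflexive Banach space (the canonical inclusion into the
double dual is surjective), `Y` a Banach space, `ι : X → Y` injective continuous linear.
If `f : [0,T] → X` is weakly continuous as a `Y`-valued function (via `ι`) and
`‖f(t)‖_X ≤ M` for a.e. `t ∈ [0,T]`, then `‖f(t)‖_X ≤ M` for every `t ∈ [0,T]` and `f`
is weakly continuous as an `X`-valued function. -/

open MeasureTheory NormedSpace

noncomputable section

open Filter Topology Metric Set

/-- If a map `u` eventually takes values in a compact set `K`, `ρ` is continuous and injective,
and `ρ ∘ u` tends to `ρ b` with `b ∈ K`, then `u` tends to `b`. -/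
theorem aux_tendsto_of_comp {α β γ : Type*} [TopologicalSpace β] [TopologicalSpace γ]
    [T2Space γ] {K : Set β} (hK : IsCompact K) {ρ : β → γ}
    (hρc : Continuous ρ) (hρi : Function.Injective ρ)
    {l : Filter α} {u : α → β} {b : β} (hb : b ∈ K)
    (hu : ∀ᶠ a in l, u a ∈ K)
    (h : Filter.Tendsto (fun a => ρ (u a)) l (nhds (ρ b))) :
    Filter.Tendsto u l (nhds b) := by
  classical
  haveI : CompactSpace K := isCompact_iff_compactSpace.mp hK
  have he : IsClosedEmbedding (fun x : K => ρ (x : β)) :=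
    Continuous.isClosedEmbedding (hρc.comp continuous_subtype_val)
      (fun x y hxy => Subtype.ext (hρi hxy))
  set u' : α → K := fun a => if h : u a ∈ K then ⟨u a, h⟩ else ⟨b, hb⟩ with hu'def
  have huu' : (fun a => (u' a : β)) =ᶠ[l] u := hu.mono (fun a ha => by simp [hu'def, ha])
  have h' : Filter.Tendsto (fun a => ρ ((u' a : β))) l (nhds (ρ b)) :=
    Filter.Tendsto.congr' ((huu'.fun_comp ρ).symm) h
  have h'' : Filter.Tendsto u' l (nhds (⟨b, hb⟩ : K)) :=
    he.isEmbedding.tendsto_nhds_iff.mpr h'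
  have h3 := ((continuous_subtype_val).tendsto (⟨b, hb⟩ : K)).comp h''
  exact Filter.Tendsto.congr' huu' h3

theorem weakly_continuous_bounded_lift
    {X Y : Type*}
    [NormedAddCommGroup X] [NormedSpace ℝ X] [CompleteSpace X]
    [NormedAddCommGroup Y] [NormedSpace ℝ Y] [CompleteSpace Y]
    (hrefl : Function.Surjective (inclusionInDoubleDual ℝ X))
    (ι : X →L[ℝ] Y) (hι : Function.Injective ι)
    (T : ℝ) (hT : 0 < T) (M : ℝ) (hM : 0 ≤ M)
    (f : ℝ → X)
    (hweakY : ∀ ψ : StrongDual ℝ Y, ContinuousOn (fun t => ψ (ι (f t))) (Set.Icc 0 T))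
    (hbound : ∀ᵐ t ∂(volume.restrict (Set.Icc 0 T)), ‖f t‖ ≤ M) :
    (∀ t ∈ Set.Icc (0 : ℝ) T, ‖f t‖ ≤ M) ∧
      (∀ φ : StrongDual ℝ X, ContinuousOn (fun t => φ (f t)) (Set.Icc 0 T)) := by
  classical
  -- the transpose of ι
  set ιs : StrongDual ℝ Y →L[ℝ] StrongDual ℝ X := (ContinuousLinearMap.compL ℝ X Y ℝ).flip ι with hιsdef
  have hιs_apply : ∀ (ψ : StrongDual ℝ Y) (x : X), ιs ψ x = ψ (ι x) := fun _ _ => rfl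
  -- the map between the double duals with the weak-* topologies
  set ρ : WeakDual ℝ (StrongDual ℝ X) → WeakDual ℝ (StrongDual ℝ Y) :=
    fun Φ => StrongDual.toWeakDual ((WeakDual.toStrongDual Φ).comp ιs) with hρdef
  have hρ_apply : ∀ (Φ : WeakDual ℝ (StrongDual ℝ X)) (ψ : StrongDual ℝ Y), ρ Φ ψ = Φ (ιs ψ) :=
    fun _ _ => rfl
  have hρc : Continuous ρ :=
    WeakDual.continuous_of_continuous_eval (fun ψ => WeakDual.eval_continuous (ιs ψ))
  -- ρ is injective, by reflexivity and injectivity of ι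
  have hρi : Function.Injective ρ := by
    intro Φ Ψ hΦΨ
    obtain ⟨x, hx⟩ := hrefl (WeakDual.toStrongDual Φ - WeakDual.toStrongDual Ψ)
    have hx0 : ι x = 0 := by
      apply eq_zero_of_forall_dual_eq_zero ℝ
      intro ψ
      have h1 : Φ (ιs ψ) = Ψ (ιs ψ) := by
        have := congrArg (fun Θ : WeakDual ℝ (StrongDual ℝ Y) => Θ ψ) hΦΨ
        simpa [hρ_apply] using this
      have h2 := congrArg (fun Θ : StrongDual ℝ (StrongDual ℝ X) => Θ (ιs ψ)) hx
      simp only [dual_def] at h2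
      have : ψ (ι x) = Φ (ιs ψ) - Ψ (ιs ψ) := by
        rw [← hιs_apply]
        rw [h2]; rfl
      rw [this, h1, sub_self]
    have hx0' : x = 0 := hι (by rw [hx0, map_zero])
    have : WeakDual.toStrongDual Φ - WeakDual.toStrongDual Ψ = 0 := by
      rw [← hx, hx0', map_zero]
    have h4 : WeakDual.toStrongDual Φ = WeakDual.toStrongDual Ψ := sub_eq_zero.mp this
    exact (WeakDual.toStrongDual_inj _ _).mp h4
  -- the double-dual embeddings of f
  set hh : ℝ → WeakDual ℝ (StrongDual ℝ X) :=
    fun t => StrongDual.toWeakDual (inclusionInDoubleDual ℝ X (f t)) with hhdef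
  set g : ℝ → WeakDual ℝ (StrongDual ℝ Y) :=
    fun t => StrongDual.toWeakDual (inclusionInDoubleDual ℝ Y (ι (f t))) with hgdef
  have hgρ : ∀ t, g t = ρ (hh t) := by
    intro t
    rfl
  -- the closed ball of radius M in the double dual, compact by Banach-Alaoglu
  set K : Set (WeakDual ℝ (StrongDual ℝ X)) := WeakDual.toStrongDual ⁻¹' Metric.closedBall (0 : StrongDual ℝ (StrongDual ℝ X)) M
    with hKdef
  have hKcomp : IsCompact K := WeakDual.isCompact_closedBall (𝕜 := ℝ) 0 M
  have hnorm : ∀ x : X, ‖inclusionInDoubleDual ℝ X x‖ = ‖x‖ := fun x =>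
    (inclusionInDoubleDualLi ℝ (E := X)).norm_map x
  have hmemK : ∀ s : ℝ, ‖f s‖ ≤ M → hh s ∈ K := by
    intro s hs
    simp only [hKdef, Set.mem_preimage, Metric.mem_closedBall, dist_zero_right]
    refine le_of_eq_of_le (dist_zero_right (inclusionInDoubleDual ℝ X (f s) : StrongDual ℝ (StrongDual ℝ X))) ?_
    show ‖inclusionInDoubleDual ℝ X (f s)‖ ≤ M
    rw [hnorm]; exact hs
  -- weak continuity of g on the interval
  have hgcont : ∀ t ∈ Set.Icc (0:ℝ) T,
      Filter.Tendsto g (nhdsWithin t (Set.Icc 0 T)) (nhds (g t)) := by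
    intro t ht
    rw [tendsto_iff_forall_eval_tendsto_topDualPairing]
    exact fun ψ => hweakY ψ t ht
  -- the set of good times, dense in the interval
  set S : Set ℝ := {s | s ∈ Set.Icc (0:ℝ) T ∧ ‖f s‖ ≤ M} with hSdef
  have hnull : volume ({s : ℝ | ¬ ‖f s‖ ≤ M} ∩ Set.Icc 0 T) = 0 := by
    have h0 := hbound
    rw [ae_iff] at h0
    rwa [Measure.restrict_apply' measurableSet_Icc] at h0
  have hSne : ∀ t ∈ Set.Icc (0:ℝ) T, (nhdsWithin t S).NeBot := by
    intro t ht
    refine mem_closure_iff_nhdsWithin_neBot.mp ?_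
    rw [Metric.mem_closure_iff]
    intro ε hε
    by_contra hcon
    push_neg at hcon
    set a := max 0 (t - ε/2) with hadef
    set b := min T (t + ε/2) with hbdef
    have ha1 : (0:ℝ) ≤ a := le_max_left _ _
    have ha2 : t - ε/2 ≤ a := le_max_right _ _
    have hb1 : b ≤ T := min_le_left _ _
    have hb2 : b ≤ t + ε/2 := min_le_right _ _
    have hab : a < b :=
      max_lt (lt_min hT (by linarith [ht.1])) (lt_min (by linarith [ht.2]) (by linarith))
    have hsub : Set.Ioo a b ⊆ {s : ℝ | ¬ ‖f s‖ ≤ M} ∩ Set.Icc 0 T := by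
      intro s hs
      have hsIcc : s ∈ Set.Icc (0:ℝ) T :=
        ⟨le_of_lt (lt_of_le_of_lt ha1 hs.1), le_of_lt (lt_of_lt_of_le hs.2 hb1)⟩
      refine ⟨fun hbad => ?_, hsIcc⟩
      have hdist : dist t s < ε := by
        rw [Real.dist_eq, abs_sub_lt_iff]
        constructor <;> linarith [hs.1, hs.2, ha2, hb2]
      exact absurd hdist (not_lt.mpr (hcon s ⟨hsIcc, hbad⟩))
    have h0 : volume (Set.Ioo a b) = 0 := measure_mono_null hsub hnull
    rw [Real.volume_Ioo] at h0
    have : b - a ≤ 0 := ENNReal.ofReal_eq_zero.mp h0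
    linarith
  -- every value lies in the ball of radius M
  have hmem : ∀ t ∈ Set.Icc (0:ℝ) T, hh t ∈ K := by
    intro t ht
    haveI := hSne t ht
    have hcl : IsClosed (ρ '' K) := (hKcomp.image hρc).isClosed
    have htend : Filter.Tendsto g (nhdsWithin t S) (nhds (g t)) :=
      (hgcont t ht).mono_left (nhdsWithin_mono t (fun s hs => hs.1))
    have hev : ∀ᶠ s in nhdsWithin t S, g s ∈ ρ '' K :=
      eventually_mem_nhdsWithin.mono (fun s hs => ⟨hh s, hmemK s hs.2, (hgρ s).symm⟩)
    have hgt : g t ∈ ρ '' K := hcl.mem_of_tendsto htend hev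
    obtain ⟨Φ, hΦK, hΦ⟩ := hgt
    have hΦ' : Φ = hh t := hρi (hΦ.trans (hgρ t))
    rwa [← hΦ']
  have hboundall : ∀ t ∈ Set.Icc (0:ℝ) T, ‖f t‖ ≤ M := by
    intro t ht
    have h1 := hmem t ht
    simp only [hKdef, Set.mem_preimage, Metric.mem_closedBall, dist_zero_right] at h1
    have h2 : ‖inclusionInDoubleDual ℝ X (f t)‖ ≤ M := le_of_eq_of_le (dist_zero_right (inclusionInDoubleDual ℝ X (f t) : StrongDual ℝ (StrongDual ℝ X))).symm h1
    rwa [hnorm] at h2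
  refine ⟨hboundall, ?_⟩
  intro φ t ht
  have h5 : Filter.Tendsto (fun s => ρ (hh s)) (nhdsWithin t (Set.Icc 0 T))
      (nhds (ρ (hh t))) := by
    rw [show (fun s => ρ (hh s)) = g from funext (fun s => (hgρ s).symm), ← hgρ t]
    exact hgcont t ht
  have htendhh : Filter.Tendsto hh (nhdsWithin t (Set.Icc 0 T)) (nhds (hh t)) :=
    aux_tendsto_of_comp hKcomp hρc hρi (hmem t ht)
      (eventually_mem_nhdsWithin.mono (fun s hs => hmem s hs)) h5
  exact ((WeakDual.eval_continuous (𝕜 := ℝ) (E := StrongDual ℝ X) φ).tendsto (hh t)).comp htendhh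
end
end

section
/- Let T > 0, h ∈ (0,1], C₀ ≥ 0, and let g ∈ L²((0,T)) with g ≥ 0 almost everywhere. Let a, b : (0,T) → [0, ∞) be measurable, with a essentially bounded, and suppose that for almost every t ∈ (0,T): (h²/2) a(t) + b(t) ≤ C₀ h⁴ + h³ ∫₀^t g(s) √(a(s)) ds. Then, with C₁ := 2(√C₀ + ‖g‖_{L²(0,T)} √(T/2))², one has a(t) ≤ C₁ h² and b(t) ≤ C₁ h⁴ for almost every t ∈ (0,T). -/
/- STATEMENT 11 (Gronwall-type energy estimate): if for a.e. `t ∈ (0,T)`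
`(h²/2) a(t) + b(t) ≤ C₀h⁴ + h³ ∫₀ᵗ g √a`, with `a` nonnegative, measurable and
essentially bounded, `b` nonnegative measurable, `g ∈ L²(0,T)` nonnegative, then with
`C₁ := 2(√C₀ + ‖g‖_{L²(0,T)} √(T/2))²` one has `a(t) ≤ C₁h²` and `b(t) ≤ C₁h⁴` a.e. -/

open MeasureTheory

noncomputable section

section AuxLemmas

open Set Filter Topology


lemma sqrt_sq_add_le {x y : ℝ} (hx : 0 ≤ x) (hy : 0 ≤ y) :
    Real.sqrt (x ^ 2 + y) ≤ x + Real.sqrt y := by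
  have h2 := Real.sq_sqrt hy
  have h3 := Real.sqrt_nonneg y
  have h1 : x ^ 2 + y ≤ (x + Real.sqrt y) ^ 2 := by nlinarith
  calc Real.sqrt (x ^ 2 + y) ≤ Real.sqrt ((x + Real.sqrt y) ^ 2) := Real.sqrt_le_sqrt h1
    _ = x + Real.sqrt y := Real.sqrt_sq (by positivity)

set_option maxHeartbeats 1000000 in
lemma quad_aux (x i : ℝ) : x ^ 2 + 2 * x * i ≤ (x + i) ^ 2 := by nlinarith [sq_nonneg i]

lemma crossing (T c ε : ℝ) (hT : 0 ≤ T) (hc : 0 ≤ c) (hε : 0 < ε)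
    (A G : ℝ → ℝ)
    (hAcont : ContinuousOn A (Icc 0 T)) (hGcont : ContinuousOn G (Icc 0 T))
    (hA0 : 0 < A 0)
    (hAnn : ∀ t ∈ Icc 0 T, 0 ≤ A t)
    (hGmono : ∀ s ∈ Icc 0 T, ∀ t ∈ Icc 0 T, s ≤ t → G s ≤ G t)
    (hyp : ∀ s ∈ Icc 0 T, ∀ t ∈ Icc 0 T, s ≤ t →
      A t ≤ A s + 2 * c * Real.sqrt (A t) * (G t - G s)) :
    ∀ t ∈ Icc 0 T, A t ≤ (Real.sqrt (A 0) + (c + ε) * (G t - G 0) + ε * t) ^ 2 := by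
  by_contra hcon
  push_neg at hcon
  obtain ⟨u, hu, hDu⟩ := hcon
  set B : ℝ → ℝ := fun t => Real.sqrt (A 0) + (c + ε) * (G t - G 0) + ε * t with hB
  set U : Set ℝ := {t | t ∈ Icc 0 T ∧ B t ^ 2 < A t} with hUdef
  have hUne : U.Nonempty := ⟨u, hu, hDu⟩
  have hUbdd : BddBelow U := ⟨0, fun x hx => hx.1.1⟩
  set t₀ := sInf U with ht₀def
  have h0mem : (0:ℝ) ∈ Icc 0 T := ⟨le_refl 0, hT⟩
  have ht₀0 : 0 ≤ t₀ := le_csInf hUne fun x hx => hx.1.1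
  have ht₀T : t₀ ≤ T := le_trans (csInf_le hUbdd hUne.choose_spec) hUne.choose_spec.1.2
  have ht₀mem : t₀ ∈ Icc 0 T := ⟨ht₀0, ht₀T⟩
  have hBpos : ∀ t ∈ Icc 0 T, 0 < B t := by
    intro t ht
    have h1 : 0 < Real.sqrt (A 0) := Real.sqrt_pos.2 hA0
    have h2 : G 0 ≤ G t := hGmono 0 h0mem t ht ht.1
    have h3 : 0 ≤ ε * t := mul_nonneg hε.le ht.1
    have : 0 ≤ (c + ε) * (G t - G 0) := mul_nonneg (by linarith) (by linarith)
    simp only [hB]; linarith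
  have hBcont : ContinuousOn B (Icc 0 T) := by
    apply ContinuousOn.add
    · exact continuousOn_const.add (continuousOn_const.mul (hGcont.sub continuousOn_const))
    · exact (continuous_const.mul continuous_id).continuousOn
  have hDcont : ContinuousOn (fun t => A t - B t ^ 2) (Icc 0 T) :=
    hAcont.sub (hBcont.pow 2)
  -- A t₀ ≤ B t₀ ^ 2
  have hkey : A t₀ ≤ B t₀ ^ 2 := by
    rcases eq_or_lt_of_le ht₀0 with h0 | h0
    · have hB0 : B 0 = Real.sqrt (A 0) := by simp [hB]
      rw [← h0, hB0, Real.sq_sqrt hA0.le]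
    · -- use left limit
      have hsub : Ico 0 t₀ ⊆ Icc 0 T := fun x hx => ⟨hx.1, hx.2.le.trans ht₀T⟩
      have hne : (𝓝[Ico (0:ℝ) t₀] t₀).NeBot := by
        rw [← mem_closure_iff_nhdsWithin_neBot, closure_Ico h0.ne]
        exact ⟨ht₀0, le_refl _⟩
      have hcw : Tendsto (fun t => A t - B t ^ 2) (𝓝[Ico (0:ℝ) t₀] t₀)
          (𝓝 (A t₀ - B t₀ ^ 2)) :=
        ((hDcont t₀ ht₀mem).mono hsub).tendsto
      have hev : ∀ᶠ x in 𝓝[Ico (0:ℝ) t₀] t₀, A x - B x ^ 2 ≤ 0 := by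
        filter_upwards [self_mem_nhdsWithin] with x hx
        have hxU : x ∉ U := notMem_of_lt_csInf hx.2 hUbdd
        have : ¬ (B x ^ 2 < A x) := fun hc' => hxU ⟨hsub hx, hc'⟩
        linarith [not_lt.mp this]
      linarith [le_of_tendsto hcw hev]
  -- global bound on A
  obtain ⟨M, hM⟩ := IsCompact.exists_bound_of_continuousOn isCompact_Icc hAcont
  have hMbd : ∀ t ∈ Icc 0 T, A t ≤ M := fun t ht =>
    le_trans (le_abs_self _) (by simpa [Real.norm_eq_abs] using hM t ht)
  have hMnn : 0 ≤ M := le_trans hA0.le (hMbd 0 h0mem)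
  obtain ⟨B₀, hB₀def⟩ : ∃ x, B t₀ = x := ⟨_, rfl⟩
  have hB₀pos : 0 < B₀ := hB₀def ▸ hBpos t₀ ht₀mem
  obtain ⟨κ, hκdef⟩ : ∃ x, 2 * c * Real.sqrt (2 * c * Real.sqrt M) = x := ⟨_, rfl⟩
  have hκnn : 0 ≤ κ := hκdef ▸ (by positivity)
  obtain ⟨δ', hδ'def⟩ : ∃ x, (2 * B₀ * ε / (κ + 1)) ^ 2 = x := ⟨_, rfl⟩
  have hδ'pos : 0 < δ' := hδ'def ▸ (by positivity)
  -- continuity of G at t₀ within Icc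
  have hGc : ContinuousWithinAt G (Icc 0 T) t₀ := hGcont t₀ ht₀mem
  rw [Metric.continuousWithinAt_iff] at hGc
  obtain ⟨δ, hδpos, hδ⟩ := hGc δ' hδ'pos
  -- pick t ∈ U close to t₀
  obtain ⟨t, htU, htlt⟩ := exists_lt_of_csInf_lt hUne (lt_add_of_pos_right t₀ hδpos)
  obtain ⟨htmem, htA⟩ := htU
  have ht₀t : t₀ ≤ t := csInf_le hUbdd ⟨htmem, htA⟩
  have ht₀t' : t₀ < t := by
    rcases eq_or_lt_of_le ht₀t with h | h
    · exfalso
      have hkey2 : A t₀ ≤ B₀ ^ 2 := by rw [← hB₀def]; exact hkey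
      rw [← h, hB₀def] at htA
      linarith
    · exact h
  have hdist : dist t t₀ < δ := by rw [Real.dist_eq, abs_of_nonneg (by linarith)]; linarith
  clear_value t₀ B U
  obtain ⟨Δ, hΔdef⟩ : ∃ x, G t - G t₀ = x := ⟨_, rfl⟩
  have hΔbd : Δ < δ' := by
    have h' := hδ htmem hdist
    rw [Real.dist_eq, hΔdef] at h'
    exact lt_of_le_of_lt (le_abs_self _) h'
  have hΔnn : 0 ≤ Δ := by
    have := hGmono t₀ ht₀mem t htmem ht₀t
    linarith [hΔdef ▸ (sub_nonneg.mpr this)]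
  obtain ⟨At, hAtdef⟩ : ∃ x, A t = x := ⟨_, rfl⟩
  obtain ⟨Bt, hBtdef⟩ : ∃ x, B t = x := ⟨_, rfl⟩
  obtain ⟨sAt, hsAtdef⟩ : ∃ x, Real.sqrt (A t) = x := ⟨_, rfl⟩
  have hsAt : Real.sqrt At = sAt := by rw [← hAtdef, hsAtdef]
  have htA' : Bt ^ 2 < At := by rw [← hAtdef, ← hBtdef]; exact htA
  have hkey' : A t₀ ≤ B₀ ^ 2 := by rw [← hB₀def]; exact hkey
  -- chain of inequalities
  have h1 : At ≤ A t₀ + 2 * c * sAt * Δ := by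
    rw [← hAtdef, ← hsAtdef, ← hΔdef]; exact hyp t₀ ht₀mem t htmem ht₀t
  have hAtnn : 0 ≤ At := hAtdef ▸ hAnn t htmem
  have hsAtnn : 0 ≤ sAt := hsAtdef ▸ Real.sqrt_nonneg _
  have h3 : sAt ≤ Real.sqrt M := by rw [← hsAtdef]; exact Real.sqrt_le_sqrt (hMbd t htmem)
  have hsMnn : 0 ≤ Real.sqrt M := Real.sqrt_nonneg M
  have h2cΔ : 0 ≤ 2 * c * Δ := by positivity
  have haux : 2 * c * sAt * Δ ≤ 2 * c * Real.sqrt M * Δ := by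
    have hm := mul_le_mul_of_nonneg_right h3 h2cΔ
    linarith only [hm]
  have h4 : At ≤ B₀ ^ 2 + 2 * c * Real.sqrt M * Δ := by linarith only [h1, hkey', haux]
  have h5 : sAt ≤ B₀ + Real.sqrt (2 * c * Real.sqrt M) * Real.sqrt Δ := by
    rw [← hsAt]
    calc Real.sqrt At ≤ Real.sqrt (B₀ ^ 2 + 2 * c * Real.sqrt M * Δ) := Real.sqrt_le_sqrt h4
      _ ≤ B₀ + Real.sqrt (2 * c * Real.sqrt M * Δ) :=
          sqrt_sq_add_le hB₀pos.le (by positivity)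
      _ = B₀ + Real.sqrt (2 * c * Real.sqrt M) * Real.sqrt Δ := by
          rw [Real.sqrt_mul (by positivity)]
  have h6 : At ≤ B₀ ^ 2 + 2 * c * B₀ * Δ + κ * Δ * Real.sqrt Δ := by
    have haux2 : 2 * c * sAt * Δ ≤ 2 * c * B₀ * Δ + κ * Δ * Real.sqrt Δ := by
      calc 2 * c * sAt * Δ = sAt * (2 * c * Δ) := by ring
        _ ≤ (B₀ + Real.sqrt (2 * c * Real.sqrt M) * Real.sqrt Δ) * (2 * c * Δ) :=
            mul_le_mul_of_nonneg_right h5 h2cΔ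
        _ = 2 * c * B₀ * Δ + (2 * c * Real.sqrt (2 * c * Real.sqrt M)) * Δ * Real.sqrt Δ := by
            ring
        _ = 2 * c * B₀ * Δ + κ * Δ * Real.sqrt Δ := by rw [hκdef]
    linarith only [h1, hkey', haux2]
  have h7 : κ * Δ * Real.sqrt Δ ≤ 2 * B₀ * ε * Δ := by
    have hsq : Real.sqrt Δ ≤ 2 * B₀ * ε / (κ + 1) := by
      calc Real.sqrt Δ ≤ Real.sqrt δ' := Real.sqrt_le_sqrt hΔbd.le
        _ = 2 * B₀ * ε / (κ + 1) := by rw [← hδ'def]; exact Real.sqrt_sq (by positivity)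
    have hκ1 : (0:ℝ) < κ + 1 := by linarith
    have hle : κ * (2 * B₀ * ε / (κ + 1)) ≤ 2 * B₀ * ε := by
      rw [mul_div_assoc', div_le_iff₀ hκ1]
      have h2Bε : 0 ≤ 2 * B₀ * ε := by positivity
      linarith only [h2Bε]
    have h71 : κ * Real.sqrt Δ ≤ 2 * B₀ * ε := by
      calc κ * Real.sqrt Δ ≤ κ * (2 * B₀ * ε / (κ + 1)) :=
            mul_le_mul_of_nonneg_left hsq hκnn
        _ ≤ 2 * B₀ * ε := hle
    calc κ * Δ * Real.sqrt Δ = (κ * Real.sqrt Δ) * Δ := by ring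
      _ ≤ (2 * B₀ * ε) * Δ := mul_le_mul_of_nonneg_right h71 hΔnn
      _ = 2 * B₀ * ε * Δ := by ring
  -- B t expansion
  have h8 : Bt = B₀ + (c + ε) * Δ + ε * (t - t₀) := by
    rw [← hBtdef, ← hB₀def, ← hΔdef]
    simp only [hB]
    ring
  have h9 : B₀ ^ 2 + 2 * B₀ * ((c + ε) * Δ + ε * (t - t₀)) ≤ Bt ^ 2 := by
    have hinc : 0 ≤ (c + ε) * Δ + ε * (t - t₀) := by
      have h1' : 0 ≤ (c + ε) * Δ := mul_nonneg (by linarith) hΔnn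
      have h2' : 0 ≤ ε * (t - t₀) := mul_nonneg hε.le (by linarith)
      linarith
    have hq := quad_aux B₀ ((c + ε) * Δ + ε * (t - t₀))
    rw [h8]
    linarith only [hq]
  have h10 : 0 < 2 * B₀ * (ε * (t - t₀)) := by
    have : 0 < t - t₀ := by linarith
    positivity
  have hfinal : At < Bt ^ 2 := by linarith only [h6, h7, h9, h10]
  exact absurd htA' (not_lt.mpr hfinal.le)

set_option maxHeartbeats 1000000 in
lemma main_eps
    (T : ℝ) (hT : 0 < T) (h : ℝ) (hh : h ∈ Set.Ioc (0 : ℝ) 1)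
    (C₀ : ℝ) (hC₀ : 0 ≤ C₀)
    (g : ℝ → ℝ) (hg : MemLp g 2 (volume.restrict (Set.Ioo 0 T)))
    (hgpos : ∀ᵐ t ∂(volume.restrict (Set.Ioo 0 T)), 0 ≤ g t)
    (a b : ℝ → ℝ) (ham : Measurable a) (hbm : Measurable b)
    (hapos : ∀ t, 0 ≤ a t) (hbpos : ∀ t, 0 ≤ b t)
    (habd : ∃ K : ℝ, ∀ᵐ t ∂(volume.restrict (Set.Ioo 0 T)), a t ≤ K)
    (hineq : ∀ᵐ t ∂(volume.restrict (Set.Ioo 0 T)),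
      h ^ 2 / 2 * a t + b t ≤
        C₀ * h ^ 4 + h ^ 3 * ∫ s in Set.Ioo (0 : ℝ) t, g s * Real.sqrt (a s))
    (ε : ℝ) (hε : 0 < ε) :
    ∀ᵐ t ∂(volume.restrict (Set.Ioo 0 T)),
      h ^ 2 / 2 * a t + b t ≤
        (Real.sqrt ((C₀ + ε) * h ^ 4) +
          (h ^ 2 / Real.sqrt 2 + ε) * (∫ s in Set.Ioo (0 : ℝ) T, g s) + ε * T) ^ 2 := by
  obtain ⟨h0, _⟩ := hh
  obtain ⟨K, hK⟩ := habd
  haveI : IsFiniteMeasure (volume.restrict (Set.Ioo (0:ℝ) T)) := by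
    constructor
    rw [Measure.restrict_apply_univ]
    exact measure_Ioo_lt_top
  have hgint : IntegrableOn g (Set.Ioo 0 T) volume :=
    memLp_one_iff_integrable.mp (hg.mono_exponent one_le_two)
  have hwm : AEStronglyMeasurable (fun s => g s * Real.sqrt (a s))
      (volume.restrict (Set.Ioo (0:ℝ) T)) :=
    hg.aestronglyMeasurable.mul ham.sqrt.aestronglyMeasurable
  have hwint : IntegrableOn (fun s => g s * Real.sqrt (a s)) (Set.Ioo 0 T) volume := by
    apply Integrable.mono' (hgint.const_mul (Real.sqrt (max K 0))) hwm
    filter_upwards [hgpos, hK] with s hgs hKs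
    rw [Real.norm_eq_abs, abs_of_nonneg (mul_nonneg hgs (Real.sqrt_nonneg _))]
    have hs2 : Real.sqrt (a s) ≤ Real.sqrt (max K 0) :=
      Real.sqrt_le_sqrt (hKs.trans (le_max_left K 0))
    calc g s * Real.sqrt (a s) ≤ g s * Real.sqrt (max K 0) :=
          mul_le_mul_of_nonneg_left hs2 hgs
      _ = Real.sqrt (max K 0) * g s := mul_comm _ _
  have hwint' : IntegrableOn (fun s => g s * Real.sqrt (a s)) (Set.Icc 0 T) volume :=
    (integrableOn_Icc_iff_integrableOn_Ioo).mpr hwint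
  have hgint' : IntegrableOn g (Set.Icc 0 T) volume :=
    (integrableOn_Icc_iff_integrableOn_Ioo).mpr hgint
  set W : ℝ → ℝ := fun t => ∫ s in Set.Ioc (0:ℝ) t, g s * Real.sqrt (a s) with hWdef
  set Gf : ℝ → ℝ := fun t => ∫ s in Set.Ioc (0:ℝ) t, g s with hGfdef
  have hWIoo : ∀ t, (∫ s in Set.Ioo (0:ℝ) t, g s * Real.sqrt (a s)) = W t := fun t =>
    integral_Ioc_eq_integral_Ioo.symm
  have hGfIoo : ∀ t, (∫ s in Set.Ioo (0:ℝ) t, g s) = Gf t := fun t =>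
    integral_Ioc_eq_integral_Ioo.symm
  have hWcont : ContinuousOn W (Set.Icc 0 T) := intervalIntegral.continuousOn_primitive hwint'
  have hGfcont : ContinuousOn Gf (Set.Icc 0 T) := intervalIntegral.continuousOn_primitive hgint'
  -- transfer of a.e. facts to subintervals
  have hbase : ∀ᵐ u ∂(volume.restrict (Set.Ioo 0 T)),
      0 ≤ g u ∧ (h ^ 2 / 2 * a u + b u ≤ C₀ * h ^ 4 + h ^ 3 * W u) := by
    filter_upwards [hgpos, hineq] with u h1 h2
    exact ⟨h1, by rwa [hWIoo u] at h2⟩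
  have htrans : ∀ s t : ℝ, 0 ≤ s → t ≤ T →
      ∀ᵐ u ∂(volume.restrict (Set.Ioc s t)),
        0 ≤ g u ∧ (h ^ 2 / 2 * a u + b u ≤ C₀ * h ^ 4 + h ^ 3 * W u) := by
    intro s t hs ht
    have h1 : volume.restrict (Set.Ioc (0:ℝ) T) = volume.restrict (Set.Ioo 0 T) :=
      (Measure.restrict_congr_set Ioo_ae_eq_Ioc).symm
    apply ae_restrict_of_ae_restrict_of_subset (Set.Ioc_subset_Ioc hs ht)
    rw [h1]
    exact hbase
  -- splitting of the primitives
  have hsub1 : ∀ s t : ℝ, s ∈ Set.Icc (0:ℝ) T → t ≤ T → Set.Ioc s t ⊆ Set.Icc 0 T :=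
    fun s t hs ht u hu => ⟨hs.1.trans hu.1.le, hu.2.trans ht⟩
  have hsplitW : ∀ s ∈ Set.Icc (0:ℝ) T, ∀ t ∈ Set.Icc (0:ℝ) T, s ≤ t →
      W t = W s + ∫ u in Set.Ioc s t, g u * Real.sqrt (a u) := by
    intro s hs t ht hst
    rw [hWdef]
    simp only
    rw [← Set.Ioc_union_Ioc_eq_Ioc hs.1 hst]
    rw [setIntegral_union (Set.Ioc_disjoint_Ioc_of_le le_rfl) measurableSet_Ioc
      (hwint'.mono_set (hsub1 0 s ⟨le_refl 0, hT.le⟩ hs.2))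
      (hwint'.mono_set (hsub1 s t hs ht.2))]
  have hsplitG : ∀ s ∈ Set.Icc (0:ℝ) T, ∀ t ∈ Set.Icc (0:ℝ) T, s ≤ t →
      Gf t = Gf s + ∫ u in Set.Ioc s t, g u := by
    intro s hs t ht hst
    rw [hGfdef]
    simp only
    rw [← Set.Ioc_union_Ioc_eq_Ioc hs.1 hst]
    rw [setIntegral_union (Set.Ioc_disjoint_Ioc_of_le le_rfl) measurableSet_Ioc
      (hgint'.mono_set (hsub1 0 s ⟨le_refl 0, hT.le⟩ hs.2))
      (hgint'.mono_set (hsub1 s t hs ht.2))]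
  -- nonnegativity of increments
  have hincW : ∀ s t : ℝ, 0 ≤ s → t ≤ T →
      0 ≤ ∫ u in Set.Ioc s t, g u * Real.sqrt (a u) := by
    intro s t hs ht
    apply integral_nonneg_of_ae
    filter_upwards [htrans s t hs ht] with u hu
    exact mul_nonneg hu.1 (Real.sqrt_nonneg _)
  have hincG : ∀ s t : ℝ, 0 ≤ s → t ≤ T → 0 ≤ ∫ u in Set.Ioc s t, g u := by
    intro s t hs ht
    apply integral_nonneg_of_ae
    filter_upwards [htrans s t hs ht] with u hu
    exact hu.1
  have hW0 : W 0 = 0 := by rw [hWdef]; simp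
  have hGf0 : Gf 0 = 0 := by rw [hGfdef]; simp
  have hWnn : ∀ t ∈ Set.Icc (0:ℝ) T, 0 ≤ W t := by
    intro t ht
    have := hincW 0 t (le_refl 0) ht.2
    rw [hsplitW 0 ⟨le_refl 0, hT.le⟩ t ht ht.1, hW0]
    linarith
  have hWmono : ∀ s ∈ Set.Icc (0:ℝ) T, ∀ t ∈ Set.Icc (0:ℝ) T, s ≤ t → W s ≤ W t := by
    intro s hs t ht hst
    rw [hsplitW s hs t ht hst]
    linarith [hincW s t hs.1 ht.2]
  have hGfmono : ∀ s ∈ Set.Icc (0:ℝ) T, ∀ t ∈ Set.Icc (0:ℝ) T, s ≤ t → Gf s ≤ Gf t := by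
    intro s hs t ht hst
    rw [hsplitG s hs t ht hst]
    linarith [hincG s t hs.1 ht.2]
  -- the majorant function
  set A : ℝ → ℝ := fun t => (C₀ + ε) * h ^ 4 + h ^ 3 * W t with hAdef
  have hAcont : ContinuousOn A (Set.Icc 0 T) :=
    continuousOn_const.add (continuousOn_const.mul hWcont)
  have hA0 : 0 < A 0 := by rw [hAdef]; simp [hW0]; positivity
  have hAnn : ∀ t ∈ Set.Icc (0:ℝ) T, 0 ≤ A t := by
    intro t ht
    have h1 := hWnn t ht
    have h2 : (0:ℝ) ≤ (C₀ + ε) * h ^ 4 := by positivity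
    have h3 : (0:ℝ) ≤ h ^ 3 * W t := mul_nonneg (by positivity) h1
    rw [hAdef]
    simp only
    linarith
  have hAmono : ∀ s ∈ Set.Icc (0:ℝ) T, ∀ t ∈ Set.Icc (0:ℝ) T, s ≤ t → A s ≤ A t := by
    intro s hs t ht hst
    have h2 := mul_le_mul_of_nonneg_left (hWmono s hs t ht hst) (by positivity : (0:ℝ) ≤ h ^ 3)
    rw [hAdef]
    simp only
    linarith
  -- the key Gronwall-type hypothesis
  have hyp : ∀ s ∈ Set.Icc (0:ℝ) T, ∀ t ∈ Set.Icc (0:ℝ) T, s ≤ t →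
      A t ≤ A s + 2 * (h ^ 2 / Real.sqrt 2) * Real.sqrt (A t) * (Gf t - Gf s) := by
    intro s hs t ht hst
    obtain ⟨At, hAtdef⟩ : ∃ x, A t = x := ⟨_, rfl⟩
    rw [hAtdef]
    have hAtnn : 0 ≤ At := hAtdef ▸ hAnn t ht
    -- pointwise bound inside the integral
    have hptwise : ∀ᵐ u ∂(volume.restrict (Set.Ioc s t)),
        g u * Real.sqrt (a u) ≤ g u * (Real.sqrt 2 * Real.sqrt At / h) := by
      filter_upwards [htrans s t hs.1 ht.2, ae_restrict_mem measurableSet_Ioc]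
        with u hu humem
      have humem' : u ∈ Set.Icc (0:ℝ) T := hsub1 s t hs ht.2 humem
      have hWu : W u ≤ W t := hWmono u humem' t ht humem.2
      have hau : h ^ 2 / 2 * a u ≤ At := by
        rw [← hAtdef, hAdef]
        simp only
        have h2 := hu.2
        have h3 := hbpos u
        have h4 : 0 ≤ ε * h ^ 4 := by positivity
        have h5 := mul_le_mul_of_nonneg_left hWu (by positivity : (0:ℝ) ≤ h ^ 3)
        linarith
      have hx : Real.sqrt (a u) ≤ Real.sqrt 2 * Real.sqrt At / h := by
        have heq : (Real.sqrt 2 * Real.sqrt At / h) ^ 2 = 2 * At / h ^ 2 := by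
          rw [div_pow, mul_pow, Real.sq_sqrt (by norm_num : (0:ℝ) ≤ 2), Real.sq_sqrt hAtnn]
        have hle : a u ≤ (Real.sqrt 2 * Real.sqrt At / h) ^ 2 := by
          rw [heq, le_div_iff₀ (by positivity : (0:ℝ) < h ^ 2)]
          linarith only [hau]
        calc Real.sqrt (a u) ≤ Real.sqrt ((Real.sqrt 2 * Real.sqrt At / h) ^ 2) :=
              Real.sqrt_le_sqrt hle
          _ = Real.sqrt 2 * Real.sqrt At / h := Real.sqrt_sq (by positivity)
      exact mul_le_mul_of_nonneg_left hx hu.1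
    have hmono : (∫ u in Set.Ioc s t, g u * Real.sqrt (a u)) ≤
        ∫ u in Set.Ioc s t, g u * (Real.sqrt 2 * Real.sqrt At / h) := by
      apply setIntegral_mono_ae_restrict
        (hwint'.mono_set (hsub1 s t hs ht.2))
        ((hgint'.mono_set (hsub1 s t hs ht.2)).mul_const _)
        hptwise
    have hmul : (∫ u in Set.Ioc s t, g u * (Real.sqrt 2 * Real.sqrt At / h)) =
        (∫ u in Set.Ioc s t, g u) * (Real.sqrt 2 * Real.sqrt At / h) :=
      integral_mul_const _ _
    have hGsplit := hsplitG s hs t ht hst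
    have hWsplit := hsplitW s hs t ht hst
    have hs2 : Real.sqrt 2 * Real.sqrt 2 = 2 := Real.mul_self_sqrt (by norm_num)
    have hs2pos : (0:ℝ) < Real.sqrt 2 := Real.sqrt_pos.2 (by norm_num)
    have hcoef : h ^ 3 * (Real.sqrt 2 * Real.sqrt At / h) =
        2 * (h ^ 2 / Real.sqrt 2) * Real.sqrt At := by
      have h2div : 2 / Real.sqrt 2 = Real.sqrt 2 := by
        rw [div_eq_iff (ne_of_gt hs2pos)]
        exact hs2.symm
      rw [show 2 * (h ^ 2 / Real.sqrt 2) * Real.sqrt At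
        = (2 / Real.sqrt 2) * (h ^ 2 * Real.sqrt At) from by ring, h2div]
      field_simp
    have hAts : At = A s + h ^ 3 * ∫ u in Set.Ioc s t, g u * Real.sqrt (a u) := by
      rw [← hAtdef, hAdef]
      simp only
      rw [hWsplit]
      ring
    have h3pos : (0:ℝ) ≤ h ^ 3 := by positivity
    have hGdiff : Gf t - Gf s = ∫ u in Set.Ioc s t, g u := by rw [hGsplit]; ring
    calc At = A s + h ^ 3 * ∫ u in Set.Ioc s t, g u * Real.sqrt (a u) := hAts
      _ ≤ A s + h ^ 3 * ((∫ u in Set.Ioc s t, g u) * (Real.sqrt 2 * Real.sqrt At / h)) := by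
          have hmm := mul_le_mul_of_nonneg_left (hmono.trans_eq hmul) h3pos
          linarith
      _ = A s + 2 * (h ^ 2 / Real.sqrt 2) * Real.sqrt At * (Gf t - Gf s) := by
          rw [hGdiff, show h ^ 3 * ((∫ u in Set.Ioc s t, g u) * (Real.sqrt 2 * Real.sqrt At / h))
            = (h ^ 3 * (Real.sqrt 2 * Real.sqrt At / h)) * ∫ u in Set.Ioc s t, g u from by ring, hcoef]
          try ring
  -- apply the crossing lemma
  have hcross := crossing T (h ^ 2 / Real.sqrt 2) ε hT.le (by positivity) hε A Gf
    hAcont hGfcont hA0 hAnn hGfmono hyp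
  -- conclude
  have hA0val : Real.sqrt (A 0) = Real.sqrt ((C₀ + ε) * h ^ 4) := by
    rw [hAdef]; simp [hW0]
  filter_upwards [hbase, ae_restrict_mem measurableSet_Ioo] with t ht htmem
  have htIcc : t ∈ Set.Icc (0:ℝ) T := ⟨htmem.1.le, htmem.2.le⟩
  have h1 := hcross t htIcc
  rw [hA0val, hGf0] at h1
  have h2 : h ^ 2 / 2 * a t + b t ≤ A t := by
    have h3 := ht.2
    have h4 : 0 ≤ ε * h ^ 4 := by positivity
    rw [hAdef]
    simp only
    nlinarith
  have hRHSle : Real.sqrt ((C₀ + ε) * h ^ 4) + (h ^ 2 / Real.sqrt 2 + ε) * (Gf t - 0) + ε * t ≤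
      Real.sqrt ((C₀ + ε) * h ^ 4) + (h ^ 2 / Real.sqrt 2 + ε) * (∫ s in Set.Ioo (0:ℝ) T, g s) + ε * T := by
    rw [hGfIoo T]
    have hGle : Gf t ≤ Gf T := hGfmono t htIcc T ⟨hT.le, le_refl T⟩ htIcc.2
    have hcoefnn : (0:ℝ) ≤ h ^ 2 / Real.sqrt 2 + ε := by positivity
    have h5 : (h ^ 2 / Real.sqrt 2 + ε) * (Gf t - 0) ≤ (h ^ 2 / Real.sqrt 2 + ε) * Gf T := by
      apply mul_le_mul_of_nonneg_left _ hcoefnn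
      linarith
    have h6 : ε * t ≤ ε * T := mul_le_mul_of_nonneg_left htIcc.2 hε.le
    linarith
  have hLHSnn : (0:ℝ) ≤ Real.sqrt ((C₀ + ε) * h ^ 4) + (h ^ 2 / Real.sqrt 2 + ε) * (Gf t - 0) + ε * t := by
    have : 0 ≤ Gf t - 0 := by rw [sub_zero]; rw [← hGf0]; exact hGfmono 0 ⟨le_refl 0, hT.le⟩ t htIcc htIcc.1
    have h7 : 0 ≤ (h ^ 2 / Real.sqrt 2 + ε) * (Gf t - 0) := mul_nonneg (by positivity) this
    have h8 : 0 ≤ ε * t := mul_nonneg hε.le htIcc.1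
    positivity
  calc h ^ 2 / 2 * a t + b t ≤ A t := h2
    _ ≤ (Real.sqrt ((C₀ + ε) * h ^ 4) + (h ^ 2 / Real.sqrt 2 + ε) * (Gf t - 0) + ε * t) ^ 2 := h1
    _ ≤ (Real.sqrt ((C₀ + ε) * h ^ 4) + (h ^ 2 / Real.sqrt 2 + ε) * (∫ s in Set.Ioo (0:ℝ) T, g s) + ε * T) ^ 2 := by
        exact pow_le_pow_left₀ hLHSnn hRHSle 2


end AuxLemmas

set_option maxHeartbeats 1000000 in
theorem gronwall_energy_estimate
    (T : ℝ) (hT : 0 < T) (h : ℝ) (hh : h ∈ Set.Ioc (0 : ℝ) 1)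
    (C₀ : ℝ) (hC₀ : 0 ≤ C₀)
    (g : ℝ → ℝ) (hg : MemLp g 2 (volume.restrict (Set.Ioo 0 T)))
    (hgpos : ∀ᵐ t ∂(volume.restrict (Set.Ioo 0 T)), 0 ≤ g t)
    (a b : ℝ → ℝ) (ham : Measurable a) (hbm : Measurable b)
    (hapos : ∀ t, 0 ≤ a t) (hbpos : ∀ t, 0 ≤ b t)
    (habd : ∃ K : ℝ, ∀ᵐ t ∂(volume.restrict (Set.Ioo 0 T)), a t ≤ K)
    (hineq : ∀ᵐ t ∂(volume.restrict (Set.Ioo 0 T)),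
      h ^ 2 / 2 * a t + b t ≤
        C₀ * h ^ 4 + h ^ 3 * ∫ s in Set.Ioo (0 : ℝ) t, g s * Real.sqrt (a s)) :
    ∀ᵐ t ∂(volume.restrict (Set.Ioo 0 T)),
      a t ≤ (2 * (Real.sqrt C₀ +
        Real.sqrt (∫ s in Set.Ioo (0 : ℝ) T, g s ^ 2) * Real.sqrt (T / 2)) ^ 2) * h ^ 2 ∧
      b t ≤ (2 * (Real.sqrt C₀ +
        Real.sqrt (∫ s in Set.Ioo (0 : ℝ) T, g s ^ 2) * Real.sqrt (T / 2)) ^ 2) * h ^ 4 := by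
  have h0 : 0 < h := hh.1
  haveI : IsFiniteMeasure (volume.restrict (Set.Ioo (0:ℝ) T)) := by
    constructor
    rw [Measure.restrict_apply_univ]
    exact measure_Ioo_lt_top
  have hkey : ∀ n : ℕ, ∀ᵐ t ∂(volume.restrict (Set.Ioo 0 T)),
      h ^ 2 / 2 * a t + b t ≤
        (Real.sqrt ((C₀ + 1 / (n + 1)) * h ^ 4) +
          (h ^ 2 / Real.sqrt 2 + 1 / (n + 1)) * (∫ s in Set.Ioo (0 : ℝ) T, g s) +
          (1 / (n + 1)) * T) ^ 2 := fun n =>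
    main_eps T hT h hh C₀ hC₀ g hg hgpos a b ham hbm hapos hbpos habd hineq
      (1 / (n + 1)) (by positivity)
  have hIG2nn : 0 ≤ ∫ s in Set.Ioo (0:ℝ) T, g s ^ 2 := integral_nonneg fun s => sq_nonneg _
  have hITnn : 0 ≤ ∫ s in Set.Ioo (0:ℝ) T, g s := integral_nonneg_of_ae hgpos
  -- Cauchy–Schwarz
  have hCS : (∫ s in Set.Ioo (0:ℝ) T, g s) ≤
      Real.sqrt (∫ s in Set.Ioo (0:ℝ) T, g s ^ 2) * Real.sqrt T := by
    have hpq : Real.HolderConjugate 2 2 := Real.HolderConjugate.two_two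
    have hg2 : MemLp g (ENNReal.ofReal 2) (volume.restrict (Set.Ioo (0:ℝ) T)) := by
      simpa using hg
    have h1c : MemLp (fun _ : ℝ => (1:ℝ)) (ENNReal.ofReal 2)
        (volume.restrict (Set.Ioo (0:ℝ) T)) := memLp_const 1
    have hH := integral_mul_le_Lp_mul_Lq_of_nonneg hpq hgpos
      (Filter.Eventually.of_forall fun _ => zero_le_one) hg2 h1c
    simp only [mul_one, one_pow, Real.one_rpow, Real.rpow_two] at hH
    rw [integral_const] at hH
    simp only [measureReal_def, Measure.restrict_apply_univ, Real.volume_Ioo, sub_zero, smul_eq_mul, mul_one,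
      ENNReal.toReal_ofReal hT.le] at hH
    calc (∫ s in Set.Ioo (0:ℝ) T, g s)
        ≤ (∫ s in Set.Ioo (0:ℝ) T, g s ^ 2) ^ (1/2:ℝ) * T ^ (1/2:ℝ) := hH
      _ = Real.sqrt (∫ s in Set.Ioo (0:ℝ) T, g s ^ 2) * Real.sqrt T := by
          rw [Real.sqrt_eq_rpow, Real.sqrt_eq_rpow]
  filter_upwards [ae_all_iff.mpr hkey] with t hts
  set IT := ∫ s in Set.Ioo (0:ℝ) T, g s with hITdef
  set IG2 := ∫ s in Set.Ioo (0:ℝ) T, g s ^ 2 with hIG2def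
  -- pass to the limit
  have h5 : Filter.Tendsto (fun n : ℕ => (1:ℝ)/(n+1)) Filter.atTop (nhds 0) :=
    tendsto_one_div_add_atTop_nhds_zero_nat
  have hLt : Filter.Tendsto (fun n : ℕ =>
      (Real.sqrt ((C₀ + 1/(n+1)) * h ^ 4) + (h ^ 2 / Real.sqrt 2 + 1/(n+1)) * IT
        + (1/(n+1)) * T) ^ 2) Filter.atTop
      (nhds ((Real.sqrt (C₀ * h ^ 4) + (h ^ 2 / Real.sqrt 2) * IT) ^ 2)) := by
    have t1 : Filter.Tendsto (fun n : ℕ => Real.sqrt ((C₀ + 1/(n+1)) * h ^ 4))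
        Filter.atTop (nhds (Real.sqrt (C₀ * h ^ 4))) := by
      apply (Real.continuous_sqrt.tendsto _).comp
      have ta : Filter.Tendsto (fun n : ℕ => (C₀ + 1/(n+1)) * h ^ 4) Filter.atTop
          (nhds ((C₀ + 0) * h ^ 4)) := (Filter.Tendsto.add tendsto_const_nhds h5).mul_const _
      simpa using ta
    have t2 : Filter.Tendsto (fun n : ℕ => (h ^ 2 / Real.sqrt 2 + 1/(n+1)) * IT)
        Filter.atTop (nhds ((h ^ 2 / Real.sqrt 2) * IT)) := by
      have tb : Filter.Tendsto (fun n : ℕ => (h ^ 2 / Real.sqrt 2 + 1/(n+1)) * IT) Filter.atTop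
          (nhds ((h ^ 2 / Real.sqrt 2 + 0) * IT)) :=
        (Filter.Tendsto.add tendsto_const_nhds h5).mul_const _
      simpa using tb
    have t3 : Filter.Tendsto (fun n : ℕ => (1/(n+1)) * T) Filter.atTop (nhds (0:ℝ)) := by
      simpa using h5.mul_const T
    have := ((t1.add t2).add t3).pow 2
    simpa using this
  have hlim : h ^ 2 / 2 * a t + b t ≤
      (Real.sqrt (C₀ * h ^ 4) + (h ^ 2 / Real.sqrt 2) * IT) ^ 2 :=
    ge_of_tendsto hLt (Filter.Eventually.of_forall fun n => hts n)
  -- compare constants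
  set R := Real.sqrt C₀ + Real.sqrt IG2 * Real.sqrt (T / 2) with hRdef
  have hRnn : 0 ≤ R := by
    rw [hRdef]
    positivity
  have hL0le : Real.sqrt (C₀ * h ^ 4) + (h ^ 2 / Real.sqrt 2) * IT ≤ h ^ 2 * R := by
    have e1 : Real.sqrt (C₀ * h ^ 4) = Real.sqrt C₀ * h ^ 2 := by
      rw [Real.sqrt_mul hC₀, show h ^ 4 = (h ^ 2) ^ 2 from by ring,
        Real.sqrt_sq (by positivity)]
    have e2 : Real.sqrt (T / 2) = Real.sqrt T / Real.sqrt 2 := Real.sqrt_div hT.le 2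
    have e3 : (h ^ 2 / Real.sqrt 2) * IT ≤
        (h ^ 2 / Real.sqrt 2) * (Real.sqrt IG2 * Real.sqrt T) :=
      mul_le_mul_of_nonneg_left hCS (by positivity)
    have e4 : (h ^ 2 / Real.sqrt 2) * (Real.sqrt IG2 * Real.sqrt T) =
        h ^ 2 * (Real.sqrt IG2 * Real.sqrt (T / 2)) := by
      rw [e2]; ring
    rw [hRdef]
    calc Real.sqrt (C₀ * h ^ 4) + (h ^ 2 / Real.sqrt 2) * IT
        ≤ Real.sqrt C₀ * h ^ 2 + h ^ 2 * (Real.sqrt IG2 * Real.sqrt (T / 2)) := by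
          have e5 := e3.trans_eq e4
          rw [e1]
          linarith only [e5]
      _ = h ^ 2 * (Real.sqrt C₀ + Real.sqrt IG2 * Real.sqrt (T / 2)) := by ring
  have hL0nn : 0 ≤ Real.sqrt (C₀ * h ^ 4) + (h ^ 2 / Real.sqrt 2) * IT :=
    add_nonneg (Real.sqrt_nonneg _) (mul_nonneg (by positivity) hITnn)
  have hmain : h ^ 2 / 2 * a t + b t ≤ R ^ 2 * h ^ 4 := by
    have := hlim.trans (pow_le_pow_left₀ hL0nn hL0le 2)
    calc h ^ 2 / 2 * a t + b t ≤ (h ^ 2 * R) ^ 2 := this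
      _ = R ^ 2 * h ^ 4 := by ring
  constructor
  · have h6 : h ^ 2 / 2 * a t ≤ R ^ 2 * h ^ 4 := by linarith [hbpos t]
    have h8 : a t = (2 / h ^ 2) * (h ^ 2 / 2 * a t) := by field_simp
    have h7 : a t ≤ 2 * R ^ 2 * h ^ 2 := by
      rw [h8]
      calc (2 / h ^ 2) * (h ^ 2 / 2 * a t) ≤ (2 / h ^ 2) * (R ^ 2 * h ^ 4) :=
            mul_le_mul_of_nonneg_left h6 (by positivity)
        _ = 2 * R ^ 2 * h ^ 2 := by field_simp
    linarith
  · have h6 : b t ≤ R ^ 2 * h ^ 4 := by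
      have hape := mul_nonneg (by positivity : (0:ℝ) ≤ h ^ 2 / 2) (hapos t)
      exact (le_add_of_nonneg_left hape).trans hmain
    have h9 : 0 ≤ R ^ 2 * h ^ 4 := by positivity
    linarith
end
end
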